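/- Let (R,σ) be an assignment for (H',v₀). If σ(v₀) ≠ ⊥, then Player 2 has a winning strategy in the game 𝒢(H',v₀), i.e. the initial position v₀ e₀ is a loss for the player to move. -/

import Mathlib

/-!
Hypergraphs are represented by their incidence graphs: a hypergraph on a (finite) set
`V` of hypervertices and a (finite) set `E` of hyperedges is given by its incidence
relation `Inc : V → E → Prop` (every hyperedge being incident to at least one
hypervertex).
-/

/-- A strong cycle of the hypergraph `Inc`, with `m` (pairwise distinct) hypervertices
`v i` and `m` (pairwise distinct) hyperedges `e i`, indexed cyclically; as a cycle
`v 0, e 0, v 1, e 1, …` of the incidence graph it has length `2m`.  Strongness means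
that the subgraph of the incidence graph induced by the entries of the cycle contains
exactly the consecutive incidences: `v i` is incident to `e j` iff `i = j` or
`i = j + 1`. -/
def IsStrongCycle {V E : Type} (Inc : V → E → Prop) (m : ℕ)
    (v : ZMod m → V) (e : ZMod m → E) : Prop :=
  Function.Injective v ∧ Function.Injective e ∧
    ∀ i j : ZMod m, Inc (v i) (e j) ↔ (i = j ∨ i = j + 1)

/-- The hypergraph `Inc` is balanced: it has no strong cycle of length `4k + 2` for an
integer `k ≥ 1`, i.e. (the incidence graph being bipartite) no strong cycle with an odd
number `m ≥ 3` of hyperedges. -/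
def BalancedInc {V E : Type} (Inc : V → E → Prop) : Prop :=
  ∀ m : ℕ, 3 ≤ m → Odd m → ∀ v : ZMod m → V, ∀ e : ZMod m → E,
    ¬ IsStrongCycle Inc m v e

/-- `M` is a matching of the hypergraph `Inc`: a set of hyperedges splitting `V`, i.e.
every hypervertex is incident to at most one hyperedge of `M`. -/
def IsHyperMatching {V E : Type} (Inc : V → E → Prop) (M : Set E) : Prop :=
  ∀ u : V, {e | e ∈ M ∧ Inc u e}.Subsingleton

/-- `T` is a transversal of the hypergraph `Inc`: a set of hypervertices covering `E`,
i.e. every hyperedge is incident to at least one hypervertex of `T`. -/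
def IsHyperTransversal {V E : Type} (Inc : V → E → Prop) (T : Set V) : Prop :=
  ∀ e : E, ∃ u ∈ T, Inc u e

/-!
Construction of `H'` from a balanced hypergraph `H` (with incidence relation
`Inc : V → E → Prop`) and an independent transversal `U ⊆ V` of `H`: we add two
hypervertices `v₀, v₁`, a hyperedge `e₀` incident exactly to `v₀` and `v₁`, and, for
each `v ∈ U`, a hyperedge `f_v` incident exactly to `v₁` and `v`.  Hypervertices of
`H'` are encoded by `Option (Option V)` (`none` is `v₀`, `some none` is `v₁`,
`some (some v)` is `v ∈ V`) and hyperedges of `H'` by `Option (E ⊕ U)` (`none` is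
`e₀`, `some (Sum.inl e)` is `e ∈ E`, `some (Sum.inr v)` is `f_v` for `v ∈ U`).
-/

/-- The hypervertices of `H'`. -/
abbrev Vh (V : Type) : Type := Option (Option V)

/-- The hyperedges of `H'`. -/
abbrev Eh (V E : Type) (U : Set V) : Type := Option (E ⊕ U)

/-- The added hypervertex `v₀`. -/
def hv0 {V : Type} : Vh V := none

/-- The added hypervertex `v₁`. -/
def hv1 {V : Type} : Vh V := some none

/-- The embedding of a hypervertex of `H` into `H'`. -/
def hemb {V : Type} (v : V) : Vh V := some (some v)

/-- The added hyperedge `e₀`. -/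
def he0 {V E : Type} {U : Set V} : Eh V E U := none

/-- The embedding of a hyperedge of `H` into `H'`. -/
def origE {V E : Type} {U : Set V} (e : E) : Eh V E U := some (Sum.inl e)

/-- The added hyperedge `f_v`, for `v ∈ U`. -/
def fE {V E : Type} {U : Set V} (v : U) : Eh V E U := some (Sum.inr v)

/-- The incidence relation of `H'`. -/
def IncExt {V E : Type} (Inc : V → E → Prop) (U : Set V) : Vh V → Eh V E U → Prop
  | none, none => True
  | some none, none => True
  | some none, some (Sum.inr _) => True
  | some (some u), some (Sum.inr v) => u = (v : V)
  | some (some u), some (Sum.inl e) => Inc u e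
  | _, _ => False

/-- `N_σ(u)`: the set of hypervertices `v ≠ u` such that `σ(v)` is a hyperedge incident
to `u`. -/
def Nsig {A B : Type} (Inc : A → B → Prop) (σ : A → Option B) (u : A) : Set A :=
  {v | v ≠ u ∧ ∃ e, σ v = some e ∧ Inc u e}

/-- `(R, σ)` is an assignment for the hypergraph `Inc` with distinguished hypervertex
`x₀` (here `σ v = none` encodes `σ(v) = ⊥`). -/
structure IsAssignmentH {A B : Type} (Inc : A → B → Prop) (x0 : A)
    (R : Set A) (σ : A → Option B) : Prop where
  /-- `x₀ ∈ R`. -/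
  mem : x0 ∈ R
  /-- `(C₁)`: for `v ∈ R`, if `σ v = e ∈ E'` then `e` is incident to `v` and every
  hypervertex `u ≠ v` incident to `e` satisfies `u ∈ R` and `σ u = ⊥`. -/
  C1 : ∀ v ∈ R, ∀ e, σ v = some e →
    Inc v e ∧ ∀ u, Inc u e → u ≠ v → u ∈ R ∧ σ u = none
  /-- `(C₂)`: for `v ∈ R`, if `σ v = ⊥` then every hyperedge `e` incident to `v` has
  some incident hypervertex `u` with `u ∈ R` and `σ u ≠ ⊥`. -/
  C2 : ∀ v ∈ R, σ v = none → ∀ e, Inc v e → ∃ u, Inc u e ∧ u ∈ R ∧ σ u ≠ none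
  /-- `(C₃)`, first half: for `v ∈ R`, `|N_σ(v)| ≤ 1`. -/
  C3 : ∀ v ∈ R, (Nsig Inc σ v).Subsingleton
  /-- `(C₃)`, second half: `N_σ(x₀) = ∅`. -/
  C3' : Nsig Inc σ x0 = ∅

/-- The list `L = [(v₀, e₀), (v₁, e₁), …]` (in path order) is a strong path
`v₀ e₀ v₁ e₁ …` of the hypergraph `Inc`: its hypervertices are pairwise distinct, its
hyperedges are pairwise distinct, and the subgraph of the incidence graph induced by
its entries contains exactly the consecutive incidences, i.e. `v i` is incident to
`e j` iff `i = j` or `i = j + 1`. -/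
def IsStrongPathL {A B : Type} (Inc : A → B → Prop) (L : List (A × B)) : Prop :=
  (L.map Prod.fst).Nodup ∧ (L.map Prod.snd).Nodup ∧
    ∀ (i j : ℕ) (hi : i < L.length) (hj : j < L.length),
      (Inc (L.get ⟨i, hi⟩).1 (L.get ⟨j, hj⟩).2 ↔ (i = j ∨ i = j + 1))

/-- Auxiliary fuelled definition of the game value of the game `𝒢(H', v₀)`.  A position
is a strong path `v₀ e₀ v₁ e₁ … v_k e_k`, stored as the list `P` of its pairs
`(v_i, e_i)` in *reverse* order (head `= (v_k, e_k)`); the player to move must choose a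
hypervertex `v` and a hyperedge `e` such that the extended sequence is again a strong
path; a position is a win for the player to move iff some legal move leads to a loss
for the player to move there.  The fuel is (an upper bound on) the number of unused
hypervertices, which decreases by one at each move, so that with fuel equal to the
number of unused hypervertices this is exactly the well-founded definition of the game
value. -/
def winAuxH {A B : Type} (Inc : A → B → Prop) : ℕ → List (A × B) → Prop
  | 0, _ => False
  | n + 1, P => ∃ v e, IsStrongPathL Inc (((v, e) :: P).reverse) ∧
      ¬ winAuxH Inc n ((v, e) :: P)

/-- The position of `𝒢(H', v₀)` given by the strong path whose pairs, in reverse order,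
form the list `P`, is a win for the player to move. -/
def WinPosH {A B : Type} [Fintype A] (Inc : A → B → Prop) (P : List (A × B)) : Prop :=
  winAuxH Inc {a : A | a ∉ P.map Prod.fst}.ncard P

namespace Stmt13Aux

/-- Function version of strong paths: `N` entries accessed by functions. -/
def StrongFn {A B : Type} (Inc : A → B → Prop) (N : ℕ) (v : ℕ → A) (e : ℕ → B) : Prop :=
  (∀ i j, i < N → j < N → v i = v j → i = j) ∧
  (∀ i j, i < N → j < N → e i = e j → i = j) ∧
  ∀ i j, i < N → j < N → (Inc (v i) (e j) ↔ (i = j ∨ i = j + 1))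

theorem strongFn_congr {A B : Type} {Inc : A → B → Prop} {N : ℕ}
    {v v' : ℕ → A} {e e' : ℕ → B} (hv : ∀ i < N, v i = v' i) (he : ∀ i < N, e i = e' i)
    (h : StrongFn Inc N v e) : StrongFn Inc N v' e' := by
  obtain ⟨h1, h2, h3⟩ := h
  refine ⟨fun i j hi hj hh => h1 i j hi hj ?_, fun i j hi hj hh => h2 i j hi hj ?_,
    fun i j hi hj => ?_⟩
  · rw [hv i hi, hv j hj]; exact hh
  · rw [he i hi, he j hj]; exact hh
  · rw [← hv i hi, ← he j hj]; exact h3 i j hi hj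

theorem nodup_map_iff_getD {α γ : Type*} [Inhabited α] (f : α → γ) (L : List α) :
    (L.map f).Nodup ↔ ∀ i j, i < L.length → j < L.length →
      f (L.getD i default) = f (L.getD j default) → i = j := by
  rw [List.nodup_iff_injective_get]
  constructor
  · intro h i j hi hj hf
    have hi' : i < (L.map f).length := by simpa using hi
    have hj' : j < (L.map f).length := by simpa using hj
    have : (L.map f).get ⟨i, hi'⟩ = (L.map f).get ⟨j, hj'⟩ := by
      simp only [List.get_eq_getElem, List.getElem_map]
      rw [← List.getD_eq_getElem L default hi, ← List.getD_eq_getElem L default hj]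
      exact hf
    have := h this
    simpa using congrArg Fin.val this
  · intro h i j hij
    have hi : (i : ℕ) < L.length := by have := i.2; simpa using this
    have hj : (j : ℕ) < L.length := by have := j.2; simpa using this
    have : f (L.getD i default) = f (L.getD j default) := by
      rw [List.getD_eq_getElem L default hi, List.getD_eq_getElem L default hj]
      simpa only [List.get_eq_getElem, List.getElem_map] using hij
    exact Fin.ext (h i j hi hj this)

theorem isStrongPathL_iff_strongFn {A B : Type} [Inhabited A] [Inhabited B]
    (Inc : A → B → Prop) (L : List (A × B)) :
    IsStrongPathL Inc L ↔ StrongFn Inc L.length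
      (fun i => (L.getD i default).1) (fun i => (L.getD i default).2) := by
  unfold IsStrongPathL StrongFn
  rw [nodup_map_iff_getD, nodup_map_iff_getD]
  constructor
  · rintro ⟨h1, h2, h3⟩
    refine ⟨h1, h2, fun i j hi hj => ?_⟩
    have := h3 i j hi hj
    rwa [List.get_eq_getElem, List.get_eq_getElem, ← List.getD_eq_getElem L default hi,
      ← List.getD_eq_getElem L default hj] at this
  · rintro ⟨h1, h2, h3⟩
    refine ⟨h1, h2, fun i j hi hj => ?_⟩
    have := h3 i j hi hj
    rwa [List.get_eq_getElem, List.get_eq_getElem, ← List.getD_eq_getElem L default hi,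
      ← List.getD_eq_getElem L default hj]

section IncExtFacts

variable {V E : Type} {U : Set V} {Inc : V → E → Prop}

theorem inc_he0_cases (x : Vh V) (h : IncExt Inc U x (he0 : Eh V E U)) :
    x = hv0 ∨ x = hv1 := by
  match x with
  | none => exact Or.inl rfl
  | some none => exact Or.inr rfl
  | some (some z) => exact absurd h (by simp [IncExt, he0])

theorem inc_hv0_cases (β : Eh V E U) (h : IncExt Inc U hv0 β) : β = he0 := by
  match β with
  | none => rfl
  | some (Sum.inl ε) => exact absurd h (by simp [IncExt, hv0])
  | some (Sum.inr y) => exact absurd h (by simp [IncExt, hv0])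

theorem inc_hv1_cases (β : Eh V E U) (h : IncExt Inc U hv1 β) :
    β = he0 ∨ ∃ y : U, β = fE y := by
  match β with
  | none => exact Or.inl rfl
  | some (Sum.inl ε) => exact absurd h (by simp [IncExt, hv1])
  | some (Sum.inr y) => exact Or.inr ⟨y, rfl⟩

theorem inc_fE_cases (x : Vh V) (y : U) (h : IncExt Inc U x (fE y)) :
    x = hv1 ∨ x = hemb (y : V) := by
  match x with
  | none => exact absurd h (by simp [IncExt, fE])
  | some none => exact Or.inl rfl
  | some (some z) =>
    refine Or.inr ?_
    have : z = (y : V) := h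
    rw [this]; rfl

theorem two_hembs_origE {a b : Vh V} {β : Eh V E U}
    (ha : IncExt Inc U a β) (hb : IncExt Inc U b β) (hab : a ≠ b)
    (hea : ∃ x, a = hemb x) (heb : ∃ x, b = hemb x) :
    ∃ ε : E, β = origE ε := by
  obtain ⟨x, rfl⟩ := hea
  obtain ⟨x', rfl⟩ := heb
  match β with
  | none => exact absurd ha (by simp [IncExt, hemb])
  | some (Sum.inl ε) => exact ⟨ε, rfl⟩
  | some (Sum.inr y) =>
    exfalso
    have h1 : x = (y : V) := ha
    have h2 : x' = (y : V) := hb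
    exact hab (by rw [hemb, hemb, h1, h2])

theorem inc_hemb_origE (x : V) (ε : E) :
    IncExt Inc U (hemb x) (origE ε) ↔ Inc x ε := Iff.rfl

/-- extract the original hypervertex -/
def unemb [Inhabited V] : Vh V → V
  | some (some x) => x
  | _ => default

@[simp] theorem unemb_hemb [Inhabited V] (x : V) : unemb (hemb x) = x := rfl

/-- extract the original hyperedge -/
def unorig [Inhabited E] : Eh V E U → E
  | some (Sum.inl ε) => ε
  | _ => default

@[simp] theorem unorig_origE [Inhabited E] (ε : E) : unorig (origE ε : Eh V E U) = ε := rfl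

end IncExtFacts

section Respond

variable {V E : Type} {Inc : V → E → Prop} {U : Set V}
  {R : Set (Vh V)} {σ : Vh V → Option (Eh V E U)}

theorem respond (hbal : BalancedInc Inc) (hA : IsAssignmentH (IncExt Inc U) hv0 R σ)
    (N : ℕ) (v : ℕ → Vh V) (e : ℕ → Eh V E U)
    (hN : N % 2 = 1) (h0v : v 0 = hv0) (h0e : e 0 = he0)
    (hinv : ∀ i < N, v i ∈ R ∧ σ (v i) = if i % 2 = 0 then some (e i) else none)
    (hstrong : StrongFn (IncExt Inc U) (N + 1) v e) :
    ∃ u g, σ u = some g ∧ u ∈ R ∧ v N ∈ R ∧ σ (v N) = none ∧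
      StrongFn (IncExt Inc U) (N + 2)
        (Function.update v (N+1) u) (Function.update e (N+1) g) := by
  classical
  obtain ⟨hvinj, heinj, hadj⟩ := hstrong
  have hN1 : 1 ≤ N := by omega
  have hprev := hinv (N-1) (by omega)
  rw [if_pos (by omega)] at hprev
  have hIncN : IncExt Inc U (v N) (e (N-1)) :=
    (hadj N (N-1) (by omega) (by omega)).mpr (Or.inr (by omega))
  have hneprev : v N ≠ v (N-1) := fun hh => by
    have := hvinj N (N-1) (by omega) (by omega) hh; omega
  obtain ⟨hwR, hwσ⟩ := (hA.C1 (v (N-1)) hprev.1 (e (N-1)) hprev.2).2 (v N) hIncN hneprev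
  have hIncwf : IncExt Inc U (v N) (e N) := (hadj N N (by omega) (by omega)).mpr (Or.inl rfl)
  obtain ⟨u, huf, huR, huσ⟩ := hA.C2 (v N) hwR hwσ (e N) hIncwf
  obtain ⟨g, hg⟩ := Option.ne_none_iff_exists'.mp huσ
  obtain ⟨hug, hC1u⟩ := hA.C1 u huR g hg
  -- Claim A : u is fresh
  have hufresh : ∀ i ≤ N, u ≠ v i := by
    intro i hi hh
    rcases Nat.lt_or_ge i N with hlt | hge
    · have : IncExt Inc U (v i) (e N) := hh ▸ huf
      rw [hadj i N (by omega) (by omega)] at this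
      omega
    · have hiN : i = N := le_antisymm hi hge
      subst hiN
      rw [hh, hwσ] at hg
      exact nomatch hg
  -- Claim B : the last Player-1 vertex is not incident to g
  have hwg : ¬ IncExt Inc U (v N) g := by
    intro hwg
    have h1 : v (N-1) ∈ Nsig (IncExt Inc U) σ (v N) :=
      ⟨Ne.symm hneprev, e (N-1), hprev.2, hIncN⟩
    have h2 : u ∈ Nsig (IncExt Inc U) σ (v N) := ⟨hufresh N le_rfl, g, hg, hwg⟩
    exact hufresh (N-1) (by omega) (hA.C3 (v N) hwR h2 h1)
  -- Claim C : g is a fresh hyperedge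
  have hgfresh : ∀ j ≤ N, g ≠ e j := by
    intro j hj hgej
    rcases eq_or_lt_of_le hj with hjN | hjlt
    · exact hwg (by rw [hgej, hjN]; exact hIncwf)
    by_cases hj2 : j % 2 = 0
    · have h := hinv j hjlt
      rw [if_pos hj2] at h
      have hIncvj : IncExt Inc U (v j) g := by
        rw [hgej]; exact (hadj j j (by omega) (by omega)).mpr (Or.inl rfl)
      have := (hC1u (v j) hIncvj (Ne.symm (hufresh j (le_of_lt hjlt)))).2
      rw [h.2] at this
      exact nomatch this
    · have hj1 : j + 1 < N := by omega
      have h := hinv (j+1) hj1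
      rw [if_pos (by omega)] at h
      have hIncvj : IncExt Inc U (v (j+1)) g := by
        rw [hgej]; exact (hadj (j+1) j (by omega) (by omega)).mpr (Or.inr rfl)
      have := (hC1u (v (j+1)) hIncvj (Ne.symm (hufresh (j+1) (by omega)))).2
      rw [h.2] at this
      exact nomatch this
  -- Claim D : no old vertex is incident to g
  have hDg : ∀ i ≤ N, ¬ IncExt Inc U (v i) g := by
    intro i hi hInc
    rcases eq_or_lt_of_le hi with hiN | hilt
    · exact hwg (by rw [← hiN]; exact hInc)
    have hC := hC1u (v i) hInc (Ne.symm (hufresh i (le_of_lt hilt)))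
    have h := hinv i hilt
    by_cases hi2 : i % 2 = 0
    · rw [if_pos hi2] at h
      rw [h.2] at hC
      exact nomatch hC.2
    · have hprev2 := hinv (i-1) (by omega)
      rw [if_pos (by omega)] at hprev2
      have h1 : v (i-1) ∈ Nsig (IncExt Inc U) σ (v i) := by
        refine ⟨fun hh => ?_, e (i-1), hprev2.2, ?_⟩
        · have := hvinj (i-1) i (by omega) (by omega) hh; omega
        · exact (hadj i (i-1) (by omega) (by omega)).mpr (Or.inr (by omega))
      have h2 : u ∈ Nsig (IncExt Inc U) σ (v i) :=
        ⟨hufresh i (le_of_lt hilt), g, hg, hInc⟩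
      exact hufresh (i-1) (by omega) (hA.C3 (v i) h.1 h2 h1)
  -- Claim E : u is not incident to any old hyperedge
  have hue : ∀ j < N, ¬ IncExt Inc U u (e j) := by
    intro j0 hj0N hj0
    obtain ⟨J, hPJ, hJN, hJmax⟩ :
        ∃ J, IncExt Inc U u (e J) ∧ J < N ∧
          ∀ j, J < j → j < N → ¬ IncExt Inc U u (e j) := by
      refine ⟨Nat.findGreatest (fun j => IncExt Inc U u (e j)) (N-1),
        Nat.findGreatest_spec (P := fun j => IncExt Inc U u (e j)) (n := N-1) (m := j0) (by omega) hj0, ?_,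
        fun j h1 h2 => Nat.findGreatest_is_greatest h1 (by omega)⟩
      have := Nat.findGreatest_le (P := fun j => IncExt Inc U u (e j)) (N-1)
      omega
    by_cases hJ2 : J % 2 = 0
    · have h := hinv J hJN
      rw [if_pos hJ2] at h
      exact huσ ((hA.C1 (v J) h.1 (e J) h.2).2 u hPJ (hufresh J (le_of_lt hJN))).2
    · -- J is odd
      have hN3 : 3 ≤ N := by omega
      have hv1e : v 1 = hv1 := by
        have hInc10 : IncExt Inc U (v 1) (e 0) :=
          (hadj 1 0 (by omega) (by omega)).mpr (Or.inr rfl)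
        rw [h0e] at hInc10
        rcases inc_he0_cases (v 1) hInc10 with h1 | h1
        · exfalso
          rw [← h0v] at h1
          have := hvinj 1 0 (by omega) (by omega) h1; omega
        · exact h1
      by_cases hJ1 : J = 1
      · subst hJ1
        have hInc11 : IncExt Inc U hv1 (e 1) := by
          rw [← hv1e]; exact (hadj 1 1 (by omega) (by omega)).mpr (Or.inl rfl)
        rcases inc_hv1_cases (e 1) hInc11 with h1 | ⟨y, h1⟩
        · rw [← h0e] at h1
          have := heinj 1 0 (by omega) (by omega) h1; omega
        · have hInc21 : IncExt Inc U (v 2) (fE y) := by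
            rw [← h1]; exact (hadj 2 1 (by omega) (by omega)).mpr (Or.inr rfl)
          have hIncu1 : IncExt Inc U u (fE y) := by rw [← h1]; exact hPJ
          rcases inc_fE_cases (v 2) y hInc21 with h2 | h2
          · rw [← hv1e] at h2
            have := hvinj 2 1 (by omega) (by omega) h2; omega
          rcases inc_fE_cases u y hIncu1 with h3 | h3
          · exact hufresh 1 (by omega) (by rw [h3, hv1e])
          · exact hufresh 2 (by omega) (by rw [h3, ← h2])
      · -- J ≥ 3 : build a strong cycle, contradicting balancedness
        have hJ3 : 3 ≤ J := by omega
        have hembv : ∀ i, 2 ≤ i → i ≤ N → ∃ x : V, v i = hemb x := by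
          intro i h2 hiN
          rcases hvi : v i with _ | (_ | x)
          · exfalso
            have hvv : v i = v 0 := by rw [hvi, h0v]; rfl
            have := hvinj i 0 (by omega) (by omega) hvv; omega
          · exfalso
            have hvv : v i = v 1 := by rw [hvi, hv1e]; rfl
            have := hvinj i 1 (by omega) (by omega) hvv; omega
          · exact ⟨x, rfl⟩
        have hembu : ∃ x : V, u = hemb x := by
          rcases hu : u with _ | (_ | x)
          · exact absurd (show u = v 0 by rw [hu, h0v]; rfl) (hufresh 0 (by omega))
          · exact absurd (show u = v 1 by rw [hu, hv1e]; rfl) (hufresh 1 (by omega))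
          · exact ⟨x, rfl⟩
        obtain ⟨xu, hxu⟩ := hembu
        haveI : Inhabited V := ⟨xu⟩
        set m := N - J + 1 with hm
        have hm3 : 3 ≤ m := by omega
        have hmodd : Odd m := by rw [Nat.odd_iff]; omega
        set w' : ℕ → Vh V := fun s => if s = 0 then u else v (J + s) with hw'
        set g' : ℕ → Eh V E U := fun t => e (J + t) with hg'
        have hw'0 : w' 0 = u := by simp [hw']
        have hw's : ∀ s, s ≠ 0 → w' s = v (J + s) := by
          intro s hs; simp [hw', hs]
        have hg's : ∀ t, g' t = e (J + t) := fun t => rfl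
        have hvs : ∀ s, s < m → ∃ x : V, w' s = hemb x := by
          intro s hs
          by_cases h0 : s = 0
          · subst h0; rw [hw'0]; exact ⟨xu, hxu⟩
          · rw [hw's s h0]; exact hembv (J+s) (by omega) (by omega)
        -- incidence at the level of natural indices
        have hadj' : ∀ s t, s < m → t < m →
            (IncExt Inc U (w' s) (g' t) ↔ (s = t ∨ s = t + 1 ∨ (s = 0 ∧ t = m - 1))) := by
          intro s t hs ht
          rw [hg's]
          by_cases h0 : s = 0
          · subst h0
            rw [hw'0]
            constructor
            · intro hh
              by_cases ht0 : t = 0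
              · exact Or.inl ht0.symm
              by_cases htm : t = m - 1
              · exact Or.inr (Or.inr ⟨rfl, htm⟩)
              · exact absurd hh (hJmax (J + t) (by omega) (by omega))
            · intro hh
              rcases hh with h | h | h
              · rw [show J + t = J by omega]; exact hPJ
              · omega
              · rw [show J + t = N by omega]; exact huf
          · rw [hw's s h0, hadj (J+s) (J+t) (by omega) (by omega)]
            omega
        have hgs : ∀ t, t < m → ∃ ε : E, g' t = origE ε := by
          intro t ht
          by_cases ht0 : t = 0
          · subst ht0
            refine two_hembs_origE (Inc := Inc) (a := u) (b := v (J+1)) ?_ ?_ ?_ ⟨xu, hxu⟩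
              (hembv (J+1) (by omega) (by omega))
            · rw [hg's, show J + 0 = J by omega]; exact hPJ
            · rw [hg's, show J + 0 = J by omega]
              exact (hadj (J+1) J (by omega) (by omega)).mpr (Or.inr rfl)
            · exact hufresh (J+1) (by omega)
          by_cases htm : t = m - 1
          · have hJt : J + t = N := by omega
            refine two_hembs_origE (Inc := Inc) (a := v N) (b := u) ?_ ?_ ?_
              (hembv N (by omega) le_rfl) ⟨xu, hxu⟩
            · rw [hg's, hJt]; exact hIncwf
            · rw [hg's, hJt]; exact huf
            · exact Ne.symm (hufresh N le_rfl)
          · refine two_hembs_origE (Inc := Inc) (a := v (J+t)) (b := v (J+t+1)) ?_ ?_ ?_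
              (hembv _ (by omega) (by omega)) (hembv _ (by omega) (by omega))
            · rw [hg's]; exact (hadj (J+t) (J+t) (by omega) (by omega)).mpr (Or.inl rfl)
            · rw [hg's]; exact (hadj (J+t+1) (J+t) (by omega) (by omega)).mpr (Or.inr rfl)
            · intro hh
              have := hvinj (J+t) (J+t+1) (by omega) (by omega) hh; omega
        obtain ⟨ε0, hε0⟩ := hgs 0 (by omega)
        haveI : Inhabited E := ⟨ε0⟩
        haveI : NeZero m := ⟨by omega⟩
        have hw'inj : ∀ s t, s < m → t < m → w' s = w' t → s = t := by
          intro s t hs ht hh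
          by_cases hs0 : s = 0 <;> by_cases ht0 : t = 0
          · omega
          · exfalso
            rw [hs0, hw'0, hw's t ht0] at hh
            exact hufresh (J+t) (by omega) hh
          · exfalso
            rw [ht0, hw'0, hw's s hs0] at hh
            exact hufresh (J+s) (by omega) hh.symm
          · rw [hw's s hs0, hw's t ht0] at hh
            have := hvinj (J+s) (J+t) (by omega) (by omega) hh; omega
        have hg'inj : ∀ s t, s < m → t < m → g' s = g' t → s = t := by
          intro s t hs ht hh
          rw [hg's, hg's] at hh
          have := heinj (J+s) (J+t) (by omega) (by omega) hh; omega
        set cv : ZMod m → V := fun z => unemb (w' z.val) with hcv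
        set ce : ZMod m → E := fun z => unorig (g' z.val) with hce
        have hval : ∀ z : ZMod m, ((z.val : ℕ) : ZMod m) = z := fun z =>
          ZMod.natCast_rightInverse z
        have hcv' : ∀ z : ZMod m, hemb (cv z) = w' z.val := by
          intro z
          obtain ⟨x, hx⟩ := hvs z.val (ZMod.val_lt z)
          rw [hcv]; simp only []
          rw [hx, unemb_hemb]
        have hce' : ∀ z : ZMod m, (origE (ce z) : Eh V E U) = g' z.val := by
          intro z
          obtain ⟨ε, hε⟩ := hgs z.val (ZMod.val_lt z)
          rw [hce]; simp only []
          rw [hε, unorig_origE]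
        apply hbal m hm3 hmodd cv ce
        refine ⟨?_, ?_, ?_⟩
        · intro z1 z2 hz
          have hww : w' z1.val = w' z2.val := by
            rw [← hcv' z1, ← hcv' z2, hz]
          have hvv := hw'inj _ _ (ZMod.val_lt z1) (ZMod.val_lt z2) hww
          calc z1 = ((z1.val : ℕ) : ZMod m) := (hval z1).symm
            _ = ((z2.val : ℕ) : ZMod m) := by rw [hvv]
            _ = z2 := hval z2
        · intro z1 z2 hz
          have hww : g' z1.val = g' z2.val := by
            rw [← hce' z1, ← hce' z2, hz]
          have hvv := hg'inj _ _ (ZMod.val_lt z1) (ZMod.val_lt z2) hww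
          calc z1 = ((z1.val : ℕ) : ZMod m) := (hval z1).symm
            _ = ((z2.val : ℕ) : ZMod m) := by rw [hvv]
            _ = z2 := hval z2
        · intro z1 z2
          have h1 : Inc (cv z1) (ce z2) ↔ IncExt Inc U (w' z1.val) (g' z2.val) := by
            rw [← hcv' z1, ← hce' z2]
            exact Iff.rfl
          rw [h1, hadj' _ _ (ZMod.val_lt z1) (ZMod.val_lt z2)]
          have hs : z1.val < m := ZMod.val_lt z1
          have ht : z2.val < m := ZMod.val_lt z2
          have e1 : (z1 = z2) ↔ z1.val = z2.val := by
            constructor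
            · intro hh; rw [hh]
            · intro hh; rw [← hval z1, ← hval z2, hh]
          have ecast : ∀ a b : ℕ, a < m → b < m →
              (((a : ℕ) : ZMod m) = ((b : ℕ) : ZMod m) + 1 ↔
                (a = b + 1 ∨ (a = 0 ∧ b = m - 1))) := by
            intro a b ha hb
            rw [show ((b : ℕ) : ZMod m) + 1 = ((b + 1 : ℕ) : ZMod m) by push_cast; ring]
            rw [ZMod.natCast_eq_natCast_iff]
            unfold Nat.ModEq
            rw [Nat.mod_eq_of_lt ha]
            by_cases hc : b + 1 < m
            · rw [Nat.mod_eq_of_lt hc]; omega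
            · rw [show b + 1 = m by omega, Nat.mod_self]; omega
          have e2 := ecast z1.val z2.val hs ht
          rw [hval z1, hval z2] at e2
          rw [e1, e2]
  -- assemble the extended strong path
  have hvup : ∀ i, i ≤ N → Function.update v (N+1) u i = v i := fun i hi =>
    Function.update_of_ne (by omega) _ _
  have hvupN : Function.update v (N+1) u (N+1) = u := Function.update_self _ _ _
  have heup : ∀ i, i ≤ N → Function.update e (N+1) g i = e i := fun i hi =>
    Function.update_of_ne (by omega) _ _
  have heupN : Function.update e (N+1) g (N+1) = g := Function.update_self _ _ _
  refine ⟨u, g, hg, huR, hwR, hwσ, ?_, ?_, ?_⟩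
  · intro i j hi hj hh
    by_cases hiN : i = N+1 <;> by_cases hjN : j = N+1
    · omega
    · exfalso
      rw [hiN, hvupN, hvup j (by omega)] at hh
      exact hufresh j (by omega) hh
    · exfalso
      rw [hjN, hvupN, hvup i (by omega)] at hh
      exact hufresh i (by omega) hh.symm
    · rw [hvup i (by omega), hvup j (by omega)] at hh
      exact hvinj i j (by omega) (by omega) hh
  · intro i j hi hj hh
    by_cases hiN : i = N+1 <;> by_cases hjN : j = N+1
    · omega
    · exfalso
      rw [hiN, heupN, heup j (by omega)] at hh
      exact hgfresh j (by omega) hh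
    · exfalso
      rw [hjN, heupN, heup i (by omega)] at hh
      exact hgfresh i (by omega) hh.symm
    · rw [heup i (by omega), heup j (by omega)] at hh
      exact heinj i j (by omega) (by omega) hh
  · intro i j hi hj
    by_cases hiN : i = N+1 <;> by_cases hjN : j = N+1
    · rw [hiN, hjN, hvupN, heupN]
      exact iff_of_true hug (by omega)
    · rw [hiN, hvupN, heup j (by omega)]
      by_cases hjN' : j = N
      · rw [hjN']
        exact iff_of_true huf (by omega)
      · exact iff_of_false (hue j (by omega)) (by omega)
    · rw [hjN, heupN, hvup i (by omega)]
      exact iff_of_false (hDg i (by omega)) (by omega)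
    · rw [hvup i (by omega), heup j (by omega)]
      rw [hadj i j (by omega) (by omega)]

end Respond

section Game

variable {V E : Type} {Inc : V → E → Prop} {U : Set V}

/-- The invariant maintained by Player 2. -/
def InvL (R : Set (Vh V)) (σ : Vh V → Option (Eh V E U))
    (L : List (Vh V × Eh V E U)) : Prop :=
  L.length % 2 = 1 ∧ (L.getD 0 default).1 = hv0 ∧ (L.getD 0 default).2 = he0 ∧
    ∀ i < L.length, (L.getD i default).1 ∈ R ∧
      σ ((L.getD i default).1) = if i % 2 = 0 then some ((L.getD i default).2) else none

theorem noWin [Fintype V] [Fintype E]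
    {R : Set (Vh V)} {σ : Vh V → Option (Eh V E U)}
    (hbal : BalancedInc Inc) (hA : IsAssignmentH (IncExt Inc U) hv0 R σ) :
    ∀ n (Pl : List (Vh V × Eh V E U)),
      n = {a : Vh V | a ∉ Pl.map Prod.fst}.ncard → InvL R σ Pl.reverse →
      ¬ winAuxH (IncExt Inc U) n Pl := by
  intro n
  induction n using Nat.strong_induction_on with
  | _ n IH =>
    intro Pl hn hInv hwin
    rcases n with _ | n'
    · exact hwin
    obtain ⟨w, f, hsp, hnot⟩ := hwin
    obtain ⟨hpar, h0v, h0e, hinv⟩ := hInv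
    have hsp0 := hsp
    rw [List.reverse_cons] at hsp
    set L := Pl.reverse with hL
    set N := L.length with hN
    rw [isStrongPathL_iff_strongFn] at hsp
    have hlen1 : (L ++ [(w, f)]).length = N + 1 := by simp [hN]
    rw [hlen1] at hsp
    have hgetD1 : ∀ i, i < N → (L ++ [(w,f)]).getD i default = L.getD i default :=
      fun i hi => List.getD_append _ _ _ _ (by omega)
    have hgetDN : (L ++ [(w,f)]).getD N default = (w, f) := by
      rw [List.getD_append_right _ _ _ _ (le_refl N)]
      simp [hN]
    obtain ⟨u, g, hgu, huR, hwR, hwσ, hstrong2⟩ :=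
      respond hbal hA N (fun i => ((L ++ [(w,f)]).getD i default).1)
        (fun i => ((L ++ [(w,f)]).getD i default).2) hpar
        (by have h1 := h0v; rw [← hgetD1 0 (by omega)] at h1; exact h1)
        (by have h1 := h0e; rw [← hgetD1 0 (by omega)] at h1; exact h1)
        (by intro i hi; have h1 := hinv i hi; rw [← hgetD1 i hi] at h1; exact h1)
        hsp
    have hwR' : w ∈ R := by
      have h1 : ((L ++ [(w,f)]).getD N default).1 ∈ R := hwR
      rwa [hgetDN] at h1
    have hwσ' : σ w = none := by
      have h1 : σ ((L ++ [(w,f)]).getD N default).1 = none := hwσ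
      rwa [hgetDN] at h1
    -- the doubly extended list
    set L2 : List (Vh V × Eh V E U) := (L ++ [(w,f)]) ++ [(u,g)] with hL2
    have hlen2 : L2.length = N + 2 := by simp [hL2, hN]
    have hgetD2 : ∀ i, i < N + 1 → L2.getD i default = (L ++ [(w,f)]).getD i default :=
      fun i hi => List.getD_append _ _ _ _ (by simpa using hi)
    have hgetD2N : L2.getD (N+1) default = (u, g) := by
      rw [hL2, List.getD_append_right _ _ _ _ (by simp [hN])]
      simp [hN]
    have hsp2 : IsStrongPathL (IncExt Inc U) L2 := by
      rw [isStrongPathL_iff_strongFn, hlen2]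
      refine strongFn_congr (N := N + 2) ?_ ?_ hstrong2
      · intro i hi
        by_cases hiN : i = N + 1
        · rw [hiN, Function.update_self, hgetD2N]
        · rw [Function.update_of_ne hiN, hgetD2 i (by omega)]
      · intro i hi
        by_cases hiN : i = N + 1
        · rw [hiN, Function.update_self, hgetD2N]
        · rw [Function.update_of_ne hiN, hgetD2 i (by omega)]
    have hrev2 : ((u,g) :: (w,f) :: Pl).reverse = L2 := by
      simp [hL2, hL]
    -- freshness of the new vertices
    have hwnotin : w ∉ Pl.map Prod.fst := by
      intro hmem
      have h1 := hsp0.1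
      rw [List.reverse_cons, List.map_append, List.nodup_append] at h1
      exact h1.2.2 w (by rw [List.map_reverse, List.mem_reverse]; exact hmem) w (by simp) rfl
    have hunotin : u ∉ (L ++ [(w,f)]).map Prod.fst := by
      intro hmem
      have h1 := hsp2.1
      rw [hL2, List.map_append, List.nodup_append] at h1
      exact h1.2.2 u hmem u (by simp) rfl
    have hunotin' : u ∉ Pl.map Prod.fst ∧ u ≠ w := by
      rw [List.map_append, List.mem_append] at hunotin
      push_neg at hunotin
      refine ⟨?_, by simpa using hunotin.2⟩
      intro hmem
      exact hunotin.1 (by rw [hL, List.map_reverse, List.mem_reverse]; exact hmem)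
    -- cardinality bookkeeping
    have hS1 : {a : Vh V | a ∉ ((w,f)::Pl).map Prod.fst} =
        {a : Vh V | a ∉ Pl.map Prod.fst} \ {w} := by
      ext a
      simp only [List.map_cons, List.mem_cons, Set.mem_setOf_eq, Set.mem_diff,
        Set.mem_singleton_iff]
      tauto
    have hS1card : {a : Vh V | a ∉ ((w,f)::Pl).map Prod.fst}.ncard = n' := by
      have hwmem : w ∈ {a : Vh V | a ∉ Pl.map Prod.fst} := hwnotin
      rw [hS1, Set.ncard_diff_singleton_of_mem hwmem]
      omega
    have humem : u ∈ {a : Vh V | a ∉ ((w,f)::Pl).map Prod.fst} := by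
      simp only [List.map_cons, List.mem_cons, Set.mem_setOf_eq]
      push_neg
      exact ⟨hunotin'.2, hunotin'.1⟩
    have hn'pos : 0 < n' := by
      rw [← hS1card]
      exact (Set.ncard_pos (Set.toFinite _)).mpr ⟨u, humem⟩
    obtain ⟨n'', rfl⟩ : ∃ k, n' = k + 1 := ⟨n' - 1, by omega⟩
    -- the invariant for the extended position
    have hInv2 : InvL R σ L2 := by
      refine ⟨by rw [hlen2]; omega, ?_, ?_, ?_⟩
      · rw [hgetD2 0 (by omega), hgetD1 0 (by omega)]; exact h0v
      · rw [hgetD2 0 (by omega), hgetD1 0 (by omega)]; exact h0e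
      · intro i hi
        rw [hlen2] at hi
        by_cases hi1 : i = N + 1
        · rw [hi1, hgetD2N, if_pos (by omega)]
          exact ⟨huR, hgu⟩
        by_cases hi0 : i = N
        · rw [hi0, hgetD2 N (by omega), hgetDN, if_neg (by omega)]
          exact ⟨hwR', hwσ'⟩
        · rw [hgetD2 i (by omega), hgetD1 i (by omega)]
          exact hinv i (by omega)
    apply hnot
    show winAuxH (IncExt Inc U) (n'' + 1) ((w,f) :: Pl)
    refine ⟨u, g, by rw [hrev2]; exact hsp2, ?_⟩
    apply IH n'' (by omega)
    · -- fuel is exact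
      have hS2 : {a : Vh V | a ∉ ((u,g)::(w,f)::Pl).map Prod.fst} =
          {a : Vh V | a ∉ ((w,f)::Pl).map Prod.fst} \ {u} := by
        ext a
        simp only [List.map_cons, List.mem_cons, Set.mem_setOf_eq, Set.mem_diff,
          Set.mem_singleton_iff]
        tauto
      rw [hS2, Set.ncard_diff_singleton_of_mem humem, hS1card]
      omega
    · rw [hrev2]
      exact hInv2

end Game

end Stmt13Aux


/-- Proposition 5 (2): let `H` be a balanced hypergraph with an independent transversal
`U`, and let `(R, σ)` be an assignment for `(H', v₀)`.  If `σ(v₀) ≠ ⊥`, then Player 2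
has a winning strategy in the game `𝒢(H', v₀)`, i.e. the initial position `v₀ e₀` is a
loss for the player to move. -/
theorem stmt13 {V E : Type} [Fintype V] [Fintype E]
    (Inc : V → E → Prop) (U : Set V)
    (hbal : BalancedInc Inc)
    (hUcov : ∀ e : E, ∃ u ∈ U, Inc u e)
    (hUsplit : ∀ e : E, {u | u ∈ U ∧ Inc u e}.Subsingleton)
    (R : Set (Vh V)) (σ : Vh V → Option (Eh V E U))
    (hA : IsAssignmentH (IncExt Inc U) hv0 R σ)
    (h : σ hv0 ≠ none) :
    ¬ WinPosH (IncExt Inc U) [(hv0, he0)] := by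
  intro hwin
  have hσ0 : σ hv0 = some he0 := by
    obtain ⟨b, hb⟩ := Option.ne_none_iff_exists'.mp h
    have hinc := (hA.C1 hv0 hA.mem b hb).1
    rw [Stmt13Aux.inc_hv0_cases b hinc] at hb
    exact hb
  refine Stmt13Aux.noWin hbal hA _ [(hv0, he0)] rfl ?_ hwin
  refine ⟨rfl, rfl, rfl, ?_⟩
  intro i hi
  have hi1 : i < 1 := hi
  have hi0 : i = 0 := by omega
  subst hi0
  refine ⟨hA.mem, ?_⟩
  show σ hv0 = if 0 % 2 = 0 then some he0 else none
  rw [if_pos rfl]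
  exact hσ0
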